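/- arXiv:1012.2289 — 6 statements merged into one kernel-verified Lean document; each statement's English description precedes it below -/
import Mathlib

section
/- Let n ≥ 2, r = 1 + 2/(√n − 1), and v ∈ (0,1]^n. Then there exists an axis-parallel ellipsoid E with Q := [v₁/r, v₁] × ⋯ × [vₙ/r, vₙ] ⊆ E ⊆ [0,2]^n. -/
/-- For `v ∈ (0,1]^n` there is an axis-parallel ellipsoid `E` with
`[v₁/r, v₁] × ⋯ × [vₙ/r, vₙ] ⊆ E ⊆ [0,2]^n`, where `r = 1 + 2/(√n - 1)`. -/
theorem axis_parallel_ellipsoid_between (n : ℕ) (hn : 2 ≤ n)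
    (r : ℝ) (hr : r = 1 + 2 / (Real.sqrt n - 1))
    (v : Fin n → ℝ) (hv : ∀ i, 0 < v i ∧ v i ≤ 1) :
    ∃ (c a : Fin n → ℝ), (∀ i, 0 < a i) ∧
      {x : Fin n → ℝ | ∀ i, v i / r ≤ x i ∧ x i ≤ v i} ⊆
        {x : Fin n → ℝ | ∑ i, ((x i - c i) / a i) ^ 2 ≤ 1} ∧
      {x : Fin n → ℝ | ∑ i, ((x i - c i) / a i) ^ 2 ≤ 1} ⊆
        {x : Fin n → ℝ | ∀ i, 0 ≤ x i ∧ x i ≤ 2} := by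
  set s : ℝ := Real.sqrt n with hs
  have hn1 : (1:ℝ) < (n:ℝ) := by exact_mod_cast (by omega : 1 < n)
  have hs1 : 1 < s := by
    have := Real.sqrt_lt_sqrt (by norm_num) hn1
    simpa [hs] using this
  have hs0 : 0 < s := by linarith
  have hsn : s ^ 2 = (n:ℝ) := Real.sq_sqrt (by positivity)
  have hsm : (0:ℝ) < s - 1 := by linarith
  have hr1 : 1 < r := by
    rw [hr]; have : 0 < 2 / (s - 1) := by positivity
    linarith
  have hr0 : 0 < r := by linarith
  have key : s * (r - 1) = r + 1 := by
    rw [hr]; field_simp; ring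
  have hnn : (0:ℝ) < n := by linarith
  refine ⟨fun i => (v i / r + v i) / 2, fun i => s * ((v i - v i / r) / 2), ?_, ?_, ?_⟩
  · intro i
    have hvi := (hv i).1
    have h1 : v i / r < v i := by
      rw [div_lt_iff₀ hr0]; nlinarith
    have h2 : 0 < (v i - v i / r) / 2 := by linarith
    exact mul_pos hs0 h2
  · intro x hx
    have hterm : ∀ i ∈ Finset.univ, ((x i - (v i / r + v i) / 2) / (s * ((v i - v i / r) / 2))) ^ 2 ≤ 1 / n := by
      intro i _
      have hvi := (hv i).1
      have hlt : v i / r < v i := by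
        rw [div_lt_iff₀ hr0]; nlinarith
      have hh : 0 < (v i - v i / r) / 2 := by linarith
      have ha : 0 < s * ((v i - v i / r) / 2) := by positivity
      have h1 := (hx i).1
      have h2 := (hx i).2
      have habs : (x i - (v i / r + v i) / 2) ^ 2 ≤ ((v i - v i / r) / 2) ^ 2 := by
        apply sq_le_sq' <;> linarith
      rw [div_pow, div_le_div_iff₀ (by positivity) hnn]
      rw [mul_pow]
      have : ((v i - v i / r) / 2) ^ 2 * n ≤ s ^ 2 * ((v i - v i / r) / 2) ^ 2 * 1 := by
        rw [hsn]; ring_nf; nlinarith [sq_nonneg ((v i - v i / r) / 2)]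
      nlinarith [sq_nonneg ((v i - v i / r) / 2)]
    calc ∑ i, ((x i - (v i / r + v i) / 2) / (s * ((v i - v i / r) / 2))) ^ 2
        ≤ ∑ _i : Fin n, (1 / n : ℝ) := Finset.sum_le_sum hterm
      _ = n * (1 / n) := by rw [Finset.sum_const, Finset.card_fin]; ring
      _ = 1 := by field_simp
  · intro x hx i
    have hvi := (hv i).1
    have hvi1 := (hv i).2
    have hlt : v i / r < v i := by
      rw [div_lt_iff₀ hr0]; nlinarith
    have hh : 0 < (v i - v i / r) / 2 := by linarith
    have ha : 0 < s * ((v i - v i / r) / 2) := by positivity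
    have hone : ((x i - (v i / r + v i) / 2) / (s * ((v i - v i / r) / 2))) ^ 2 ≤ 1 := by
      have := Finset.single_le_sum (f := fun j => ((x j - (v j / r + v j) / 2) / (s * ((v j - v j / r) / 2))) ^ 2)
        (fun j _ => sq_nonneg _) (Finset.mem_univ i)
      exact le_trans this hx
    have habs : |x i - (v i / r + v i) / 2| ≤ s * ((v i - v i / r) / 2) := by
      have h2 : (x i - (v i / r + v i) / 2) ^ 2 ≤ (s * ((v i - v i / r) / 2)) ^ 2 := by
        rw [div_pow] at hone
        calc (x i - (v i / r + v i) / 2) ^ 2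
            = ((x i - (v i / r + v i) / 2) ^ 2 / (s * ((v i - v i / r) / 2)) ^ 2) * (s * ((v i - v i / r) / 2)) ^ 2 :=
              (div_mul_cancel₀ _ (by positivity)).symm
          _ ≤ 1 * (s * ((v i - v i / r) / 2)) ^ 2 := by
              apply mul_le_mul_of_nonneg_right hone (by positivity)
          _ = (s * ((v i - v i / r) / 2)) ^ 2 := by ring
      have := Real.sqrt_le_sqrt h2
      rwa [Real.sqrt_sq_eq_abs, Real.sqrt_sq ha.le] at this
    have hid : s * ((v i - v i / r) / 2) = (v i / r + v i) / 2 := by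
      field_simp
      linear_combination key
    rw [hid] at habs
    have h3 := abs_le.mp habs
    have h4 : v i / r ≤ v i := hlt.le
    constructor <;> [linarith [h3.1]; linarith [h3.2]]
end

section
/- There is a constant c > 0 such that for all n ≥ 2 and ε ∈ (0,1), the cube [−1+ε, 1−ε]^n can be covered by at most 2^{c n log n} · (1 + log(1/ε))^n ellipsoids, each of which is contained in [−1,1]^n. -/
open Real Finset

noncomputable def ellCtr (n k i : ℕ) : ℝ :=
  1 - (1/2:ℝ)^k + (2*(i:ℝ)+1) * ((1/2:ℝ)^k/(4*(n:ℝ)))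

lemma ellCtr_legal {n k i : ℕ} (hn : 1 ≤ n) (hi : i < n) :
    0 < ellCtr n k i ∧ ellCtr n k i + (1/2:ℝ)^k/4 ≤ 1 := by
  have hp0 : (0:ℝ) < (1/2:ℝ)^k := by positivity
  have hp1 : (1/2:ℝ)^k ≤ 1 := pow_le_one₀ (by norm_num) (by norm_num)
  have hnR : (1:ℝ) ≤ (n:ℝ) := by exact_mod_cast hn
  have hiR : (i:ℝ) + 1 ≤ (n:ℝ) := by exact_mod_cast hi
  have hnpos : (0:ℝ) < (n:ℝ) := by linarith
  have key2 : (2*(i:ℝ)+1)/(4*(n:ℝ)) ≤ 1/2 := by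
    rw [div_le_div_iff₀ (by positivity) (by norm_num)]
    nlinarith
  have key : (2*(i:ℝ)+1) * ((1/2:ℝ)^k/(4*(n:ℝ))) ≤ (1/2:ℝ)^k/2 := by
    calc (2*(i:ℝ)+1) * ((1/2:ℝ)^k/(4*(n:ℝ)))
        = ((2*(i:ℝ)+1)/(4*(n:ℝ))) * (1/2:ℝ)^k := by ring
      _ ≤ (1/2) * (1/2:ℝ)^k := mul_le_mul_of_nonneg_right key2 hp0.le
      _ = (1/2:ℝ)^k/2 := by ring
  constructor
  · have h1 : (0:ℝ) < (2*(i:ℝ)+1) * ((1/2:ℝ)^k/(4*(n:ℝ))) := by positivity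
    unfold ellCtr; nlinarith
  · unfold ellCtr; nlinarith

lemma ellCover1 {n : ℕ} (hn : 1 ≤ n) {ε u : ℝ} (hε0 : 0 < ε) (hε1 : ε < 1)
    (hu0 : 0 ≤ u) (hu : u ≤ 1 - ε) :
    ∃ k i : ℕ, k ≤ ⌈Real.logb 2 (1/ε)⌉₊ ∧ i < n ∧
      |u - ellCtr n k i| ≤ ((1/2:ℝ)^k/4)/(n:ℝ) := by
  have hnR : (1:ℝ) ≤ (n:ℝ) := by exact_mod_cast hn
  have hnpos : (0:ℝ) < (n:ℝ) := by linarith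
  set d : ℝ := 1 - u with hdv
  have hd0 : 0 < d := by simp only [hdv]; linarith
  have hdε : ε ≤ d := by simp only [hdv]; linarith
  have hd1 : d ≤ 1 := by simp only [hdv]; linarith
  have h1d : 1 ≤ 1/d := by rw [le_div_iff₀ hd0]; linarith
  have hlog0 : 0 ≤ Real.logb 2 (1/d) := Real.logb_nonneg one_lt_two h1d
  set k := ⌊Real.logb 2 (1/d)⌋₊ with hkv
  have hkK : k ≤ ⌈Real.logb 2 (1/ε)⌉₊ := by
    calc k ≤ ⌈Real.logb 2 (1/d)⌉₊ := Nat.floor_le_ceil _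
    _ ≤ ⌈Real.logb 2 (1/ε)⌉₊ := by
        apply Nat.ceil_mono
        apply Real.logb_le_logb_of_le one_lt_two (by positivity)
        exact one_div_le_one_div_of_le hε0 hdε
  set p : ℝ := (1/2:ℝ)^k with hpv
  have hp0 : (0:ℝ) < p := by positivity
  have hpk : p * (2:ℝ)^k = 1 := by
    rw [hpv, ← mul_pow]; norm_num
  have h2k0 : (0:ℝ) < (2:ℝ)^k := by positivity
  have hdp : d ≤ p := by
    have h1 : (2:ℝ)^(k:ℝ) ≤ (2:ℝ) ^ Real.logb 2 (1/d) :=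
      Real.rpow_le_rpow_of_exponent_le one_le_two (Nat.floor_le hlog0)
    rw [Real.rpow_logb two_pos (by norm_num) (by positivity), Real.rpow_natCast] at h1
    have h2 : (2:ℝ)^k * d ≤ 1 := by
      rw [← le_div_iff₀ hd0]
      simpa [one_div] using h1
    nlinarith
  have hpd : p/2 < d := by
    have h1 : (2:ℝ) ^ Real.logb 2 (1/d) < (2:ℝ)^((k:ℝ)+1) :=
      Real.rpow_lt_rpow_of_exponent_lt one_lt_two (Nat.lt_floor_add_one _)
    rw [Real.rpow_logb two_pos (by norm_num) (by positivity)] at h1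
    have h2 : (2:ℝ)^((k:ℝ)+1) = 2 * (2:ℝ)^k := by
      rw [Real.rpow_add two_pos, Real.rpow_natCast, Real.rpow_one, mul_comm]
    rw [h2, div_lt_iff₀ hd0] at h1
    nlinarith
  set w : ℝ := u - (1 - p) with hwv
  have hw0 : 0 ≤ w := by simp only [hwv, hdv] at *; linarith
  have hw1 : w < p/2 := by simp only [hwv, hdv] at *; linarith
  set s : ℝ := p / (2*(n:ℝ)) with hsv
  have hs0 : (0:ℝ) < s := by positivity
  set i := ⌊w / s⌋₊ with hiv
  have hws : w / s < (n:ℝ) := by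
    rw [div_lt_iff₀ hs0, hsv, mul_div_assoc', lt_div_iff₀ (by positivity)]
    nlinarith
  have hin : i < n := by
    have := Nat.floor_lt (by positivity) |>.mpr hws
    exact_mod_cast this
  have hfl : (i:ℝ) * s ≤ w := by
    have h := Nat.floor_le (show 0 ≤ w / s by positivity)
    rw [← le_div_iff₀ hs0]; exact h
  have hfu : w < ((i:ℝ) + 1) * s := by
    have h := Nat.lt_floor_add_one (w / s)
    rw [div_lt_iff₀ hs0] at h
    exact_mod_cast h
  refine ⟨k, i, hkK, hin, ?_⟩
  have hue : u - ellCtr n k i = w - (2*(i:ℝ)+1) * (s/2) := by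
    simp only [hwv, ellCtr, hpv, hsv]; ring
  have hbnd : ((1/2:ℝ)^k/4)/(n:ℝ) = s/2 := by rw [hsv, hpv]; ring
  rw [hue, hbnd, abs_le]
  constructor <;> nlinarith

set_option maxHeartbeats 1000000 in
/-- There is a constant `c > 0` such that for all `n ≥ 2` and `ε ∈ (0,1)`, the cube
`[-1+ε, 1-ε]^n` can be covered by at most `2^{c n log₂ n} · (1 + log₂(1/ε))^n`
ellipsoids (images of the unit Euclidean ball under invertible affine maps), each
contained in `[-1,1]^n`. -/
theorem ellipsoid_covering_upper_bound :
    ∃ c : ℝ, 0 < c ∧ ∀ n : ℕ, 2 ≤ n → ∀ ε : ℝ, ε ∈ Set.Ioo (0 : ℝ) 1 →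
      ∃ (m : ℕ) (A : Fin m → Matrix (Fin n) (Fin n) ℝ) (b : Fin m → (Fin n → ℝ)),
        (∀ i, IsUnit (A i).det) ∧
        (∀ i, (fun y => (A i).mulVec y + b i) '' {y : Fin n → ℝ | ∑ j, y j ^ 2 ≤ 1} ⊆
          {x : Fin n → ℝ | ∀ j, -1 ≤ x j ∧ x j ≤ 1}) ∧
        ({x : Fin n → ℝ | ∀ j, -1 + ε ≤ x j ∧ x j ≤ 1 - ε} ⊆
          ⋃ i, (fun y => (A i).mulVec y + b i) '' {y : Fin n → ℝ | ∑ j, y j ^ 2 ≤ 1}) ∧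
        (m : ℝ) ≤ 2 ^ (c * n * Real.logb 2 n) * (1 + Real.logb 2 (1 / ε)) ^ n := by
  refine ⟨3, by norm_num, ?_⟩
  intro n hn ε hε
  obtain ⟨hε0, hε1⟩ := hε
  have hn1 : 1 ≤ n := by omega
  have hne : Nonempty (Fin n) := ⟨⟨0, by omega⟩⟩
  have hnR : (1:ℝ) ≤ (n:ℝ) := by exact_mod_cast hn1
  have hnpos : (0:ℝ) < (n:ℝ) := by linarith
  set K := ⌈Real.logb 2 (1/ε)⌉₊ with hK
  set ctr : Fin (K+1) × Bool × Fin n → ℝ :=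
    fun t => (if t.2.1 then 1 else -1) * ellCtr n t.1 t.2.2 with hctr
  set rad : Fin (K+1) × Bool × Fin n → ℝ := fun t => (1/2:ℝ)^(t.1:ℕ)/4 with hrad
  have hrad0 : ∀ t, 0 < rad t := fun t => by simp only [hrad]; positivity
  have hlegal : ∀ t, |ctr t| + rad t ≤ 1 := by
    intro t
    obtain ⟨h1, h2⟩ := ellCtr_legal (n := n) (k := t.1) (i := t.2.2) hn1 t.2.2.2
    have habs : |ctr t| = ellCtr n t.1 t.2.2 := by
      rcases t with ⟨k, sb, i⟩
      cases sb <;>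
        simp only [hctr, Bool.false_eq_true, if_false, if_true, neg_one_mul, abs_neg, one_mul] <;>
        exact abs_of_pos h1
    rw [habs]
    simpa only [hrad] using h2
  have hcard : Fintype.card (Fin n → Fin (K+1) × Bool × Fin n) = ((K+1)*(2*n))^n := by
    simp [Fintype.card_fun, Fintype.card_prod, mul_assoc]
  set e : (Fin n → Fin (K+1) × Bool × Fin n) ≃ Fin (((K+1)*(2*n))^n) :=
    Fintype.equivFinOfCardEq hcard with he
  refine ⟨((K+1)*(2*n))^n,
    fun i => Matrix.diagonal (fun j => rad (e.symm i j)),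
    fun i => fun j => ctr (e.symm i j), ?_, ?_, ?_, ?_⟩
  · intro i
    rw [Matrix.det_diagonal, isUnit_iff_ne_zero]
    exact Finset.prod_ne_zero_iff.mpr fun j _ => (hrad0 _).ne'
  · rintro i x ⟨y, hy, rfl⟩ j
    simp only [Set.mem_setOf_eq] at hy
    have hyj2 : y j ^ 2 ≤ 1 :=
      le_trans (Finset.single_le_sum (f := fun j => y j ^ 2)
        (fun _ _ => sq_nonneg _) (Finset.mem_univ j)) hy
    have hyj : |y j| ≤ 1 := by
      rw [abs_le]; constructor <;> nlinarith
    set t := e.symm i j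
    have key : |rad t * y j + ctr t| ≤ 1 := by
      calc |rad t * y j + ctr t| ≤ |rad t * y j| + |ctr t| := abs_add_le _ _
      _ = rad t * |y j| + |ctr t| := by rw [abs_mul, abs_of_pos (hrad0 t)]
      _ ≤ rad t * 1 + |ctr t| := by
          have := (hrad0 t).le; gcongr
      _ ≤ 1 := by have := hlegal t; linarith
    rw [abs_le] at key
    simpa [Matrix.mulVec_diagonal] using key
  · intro x hx
    simp only [Set.mem_setOf_eq] at hx
    have H : ∀ j : Fin n, ∃ t : Fin (K+1) × Bool × Fin n,
        |x j - ctr t| ≤ rad t / (n:ℝ) := by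
      intro j
      obtain ⟨hxl, hxr⟩ := hx j
      have hax : |x j| ≤ 1 - ε := abs_le.mpr ⟨by linarith, hxr⟩
      obtain ⟨k, i0, hkK, hi0, hcl⟩ := ellCover1 hn1 hε0 hε1 (abs_nonneg (x j)) hax
      by_cases hs : 0 ≤ x j
      · refine ⟨(⟨k, by omega⟩, true, ⟨i0, hi0⟩), ?_⟩
        simp only [hctr, hrad, if_true]
        rw [abs_of_nonneg hs] at hcl
        simpa using hcl
      · refine ⟨(⟨k, by omega⟩, false, ⟨i0, hi0⟩), ?_⟩
        simp only [hctr, hrad, Bool.false_eq_true, if_false, neg_one_mul]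
        rw [abs_of_neg (lt_of_not_ge hs)] at hcl
        have hrw : x j - -ellCtr n (⟨k, by omega⟩ : Fin (K+1)) (⟨i0, hi0⟩ : Fin n)
            = -(-x j - ellCtr n k i0) := by
          simp only [Fin.val_mk]; ring
        rw [hrw, abs_neg]
        simpa using hcl
    choose g hg using H
    rw [Set.mem_iUnion]
    refine ⟨e g, (fun j => (x j - ctr (g j)) / rad (g j)), ?_, ?_⟩
    · simp only [Set.mem_setOf_eq]
      have hterm : ∀ j : Fin n, ((x j - ctr (g j)) / rad (g j)) ^ 2 ≤ (1/(n:ℝ))^2 := by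
        intro j
        have hr := hrad0 (g j)
        have habs : |(x j - ctr (g j)) / rad (g j)| ≤ 1/(n:ℝ) := by
          rw [abs_div, abs_of_pos hr, div_le_div_iff₀ hr hnpos]
          have h1 := hg j
          rw [le_div_iff₀ hnpos] at h1
          linarith
        calc ((x j - ctr (g j)) / rad (g j)) ^ 2
            = |(x j - ctr (g j)) / rad (g j)| ^ 2 := (sq_abs _).symm
          _ ≤ (1/(n:ℝ))^2 := by
              exact pow_le_pow_left₀ (abs_nonneg _) habs 2
      calc ∑ j, ((x j - ctr (g j)) / rad (g j)) ^ 2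
          ≤ ∑ _j : Fin n, (1/(n:ℝ))^2 := Finset.sum_le_sum fun j _ => hterm j
        _ = (n:ℝ) * (1/(n:ℝ))^2 := by
            rw [Finset.sum_const, Finset.card_univ, Fintype.card_fin, nsmul_eq_mul]
        _ = 1/(n:ℝ) := by
            rw [div_pow, one_pow, mul_one_div, pow_two, ← div_div, div_self hnpos.ne']
        _ ≤ 1 := by rw [div_le_one hnpos]; exact hnR
    · funext j
      simp only [Pi.add_apply, Matrix.mulVec_diagonal, Equiv.symm_apply_apply]
      rw [mul_div_cancel₀ _ (hrad0 (g j)).ne']; ring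
  · set L := Real.logb 2 (1/ε) with hL
    have hL0 : 0 < L := by
      apply Real.logb_pos one_lt_two
      rw [lt_div_iff₀ hε0]; linarith
    have hKL : (K:ℝ) < L + 1 := Nat.ceil_lt_add_one hL0.le
    have hfac : ((K:ℝ)+1)*(2*(n:ℝ)) ≤ (4*(n:ℝ))*(1+L) := by nlinarith
    have hcast : ((((K+1)*(2*n))^n : ℕ) : ℝ) = (((K:ℝ)+1)*(2*(n:ℝ)))^n := by
      push_cast; ring
    rw [hcast]
    calc (((K:ℝ)+1)*(2*(n:ℝ)))^n ≤ ((4*(n:ℝ))*(1+L))^n := by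
          apply pow_le_pow_left₀ (by positivity) hfac
      _ = (4*(n:ℝ))^n * (1+L)^n := mul_pow _ _ _
      _ ≤ 2 ^ ((3:ℝ) * n * Real.logb 2 n) * (1+L)^n := by
          apply mul_le_mul_of_nonneg_right _ (by positivity)
          have h4n : ((4*(n:ℝ)))^n = (2:ℝ) ^ ((n:ℝ) * Real.logb 2 (4*(n:ℝ))) := by
            rw [mul_comm (n:ℝ), Real.rpow_mul (by norm_num),
              Real.rpow_logb two_pos (by norm_num) (by positivity), Real.rpow_natCast]
          have hlog4 : Real.logb 2 (4*(n:ℝ)) = 2 + Real.logb 2 (n:ℝ) := by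
            rw [Real.logb_mul (by norm_num) (by positivity)]
            congr 1
            rw [show (4:ℝ) = 2^(2:ℕ) by norm_num, Real.logb_pow,
              Real.logb_self_eq_one one_lt_two]
            norm_num
          have hlogn : 1 ≤ Real.logb 2 (n:ℝ) := by
            have h2 : Real.logb 2 (2:ℝ) ≤ Real.logb 2 (n:ℝ) :=
              Real.logb_le_logb_of_le one_lt_two (by norm_num) (by exact_mod_cast hn)
            rwa [Real.logb_self_eq_one one_lt_two] at h2
          rw [h4n]
          apply Real.rpow_le_rpow_of_exponent_le one_le_two
          rw [hlog4]
          nlinarith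
end

section
/- Fix n ≥ 2 and ε ∈ (0,1). Let E = {x ∈ ℝ^n : Σ_{j=1}^n ((2^{−μ_j} − x_j)/2^{−μ_j})² ≤ 1} be an axis-parallel ellipsoid with μ ∈ ℝ^n, and let G_ε = {v ∈ ℝ^n : v_j = 2^{−α_j} ≥ ε, α_j ∈ ℕ₀}. Then |E ∩ G_ε| ≤ n · 3^{n−1} · (1 + ⌊log₂(1/ε)⌋). -/
private lemma two_rpow_pos (x : ℝ) : (0:ℝ) < (2:ℝ)^x := Real.rpow_pos_of_pos (by norm_num) x

private lemma quad_gap {r q : ℝ} (hr : (1 - r)^2 ≤ 1/2) (hq : (1 - q)^2 ≤ 1/2)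
    (hq0 : 0 < q) (h8 : 8 * q ≤ r) : False := by
  nlinarith [sq_nonneg (r - q), sq_nonneg (1-r), sq_nonneg (1-q), sq_nonneg r, sq_nonneg q, sq_nonneg (r - 8*q)]

private lemma Aset_close (μ : ℝ) {a b : ℕ}
    (ha : (1 - (2:ℝ)^(μ - (a:ℝ)))^2 ≤ 1/2)
    (hb : (1 - (2:ℝ)^(μ - (b:ℝ)))^2 ≤ 1/2) : b ≤ a + 2 := by
  by_contra h
  push_neg at h
  have hab : (a:ℝ) - b ≤ -3 := by
    have : (a:ℝ) + 3 ≤ b := by exact_mod_cast h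
    linarith
  have h1 : (2:ℝ)^(μ - (b:ℝ)) = (2:ℝ)^(μ - (a:ℝ)) * (2:ℝ)^((a:ℝ) - b) := by
    rw [← Real.rpow_add (by norm_num)]
    congr 1; ring
  have h2 : (2:ℝ)^((a:ℝ) - b) ≤ (2:ℝ)^(-3:ℝ) :=
    Real.rpow_le_rpow_of_exponent_le (by norm_num) hab
  have h3 : (2:ℝ)^(-3:ℝ) = 1/8 := by
    rw [show (-3:ℝ) = ((-3:ℤ):ℝ) by norm_num, Real.rpow_intCast]; norm_num
  have hr0 : 0 < (2:ℝ)^(μ - (a:ℝ)) := two_rpow_pos _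
  have hq0 : 0 < (2:ℝ)^(μ - (b:ℝ)) := two_rpow_pos _
  have h8 : 8 * (2:ℝ)^(μ - (b:ℝ)) ≤ (2:ℝ)^(μ - (a:ℝ)) := by
    have h2' : (2:ℝ)^((a:ℝ)-(b:ℝ)) ≤ 1/8 := h3 ▸ h2
    rw [h1]
    nlinarith [mul_le_mul_of_nonneg_left h2' hr0.le]
  exact quad_gap ha hb hq0 h8

private lemma term_eq (μ α : ℝ) :
    (((2:ℝ)^(-μ) - (2:ℝ)^(-α)) / (2:ℝ)^(-μ)) = 1 - (2:ℝ)^(μ - α) := by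
  rw [sub_div, div_self (ne_of_gt (two_rpow_pos _)), ← Real.rpow_sub (by norm_num)]
  congr 2; ring

private lemma alpha_le (ε : ℝ) (hε0 : 0 < ε) (α : ℕ) (h : ε ≤ (2:ℝ)^(-(α:ℝ))) :
    α ≤ ⌊Real.logb 2 (1/ε)⌋₊ := by
  apply Nat.le_floor
  have h2 : (2:ℝ)^(α:ℝ) ≤ 1/ε := by
    rw [Real.rpow_neg (by norm_num)] at h
    rw [le_div_iff₀ hε0]
    have hp : (0:ℝ) < (2:ℝ)^(α:ℝ) := two_rpow_pos _
    calc (2:ℝ)^(α:ℝ) * ε ≤ (2:ℝ)^(α:ℝ) * ((2:ℝ)^(α:ℝ))⁻¹ := by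
          exact mul_le_mul_of_nonneg_left h (le_of_lt hp)
      _ = 1 := mul_inv_cancel₀ (ne_of_gt hp)
  calc (α:ℝ) = Real.logb 2 ((2:ℝ)^(α:ℝ)) := (Real.logb_rpow (by norm_num) (by norm_num)).symm
    _ ≤ Real.logb 2 (1/ε) := Real.logb_le_logb_of_le (by norm_num) (two_rpow_pos _) h2

private lemma card_triple (x y z : ℕ) : ({x, y, z} : Finset ℕ).card ≤ 3 := by
  have h1 := Finset.card_insert_le x ({y, z} : Finset ℕ)
  have h2 := Finset.card_insert_le y ({z} : Finset ℕ)
  have h3 : ({z} : Finset ℕ).card = 1 := Finset.card_singleton z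
  omega

/-- An axis-parallel ellipsoid `E = {x : ∑_j ((2^{-μ_j} - x_j)/2^{-μ_j})² ≤ 1}` contains
at most `n·3^{n-1}·(1 + ⌊log₂(1/ε)⌋)` points of the grid
`G_ε = {v : v_j = 2^{-α_j} ≥ ε, α_j ∈ ℕ}`. -/
theorem ellipsoid_grid_points_bound (n : ℕ) (hn : 2 ≤ n)
    (ε : ℝ) (hε : ε ∈ Set.Ioo (0 : ℝ) 1) (μ : Fin n → ℝ) :
    ({x : Fin n → ℝ | ∑ j, (((2:ℝ) ^ (-μ j) - x j) / (2:ℝ) ^ (-μ j)) ^ 2 ≤ 1} ∩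
      {v : Fin n → ℝ | ∀ j, ∃ α : ℕ, v j = (2:ℝ) ^ (-(α:ℝ)) ∧ ε ≤ v j}).ncard ≤
    n * 3 ^ (n - 1) * (1 + ⌊Real.logb 2 (1 / ε)⌋₊) := by
  obtain ⟨hε0, hε1⟩ := hε
  set M := ⌊Real.logb 2 (1/ε)⌋₊ with hM
  set m : Fin n → ℕ := fun j => sInf {α : ℕ | (1 - (2:ℝ)^(μ j - (α:ℝ)))^2 ≤ 1/2} with hm
  set B : Fin n → Finset ℝ :=
    fun j => ({m j, m j + 1, m j + 2} : Finset ℕ).image (fun α : ℕ => (2:ℝ)^(-(α:ℝ))) with hB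
  set G : Finset ℝ := (Finset.range (M+1)).image (fun α : ℕ => (2:ℝ)^(-(α:ℝ))) with hG
  set T : Fin n → Finset (Fin n → ℝ) :=
    fun i => Fintype.piFinset (fun j => if j = i then G else B j) with hT
  set U : Finset (Fin n → ℝ) := Finset.univ.biUnion T with hU
  have hsub : ({x : Fin n → ℝ | ∑ j, (((2:ℝ) ^ (-μ j) - x j) / (2:ℝ) ^ (-μ j)) ^ 2 ≤ 1} ∩
      {v : Fin n → ℝ | ∀ j, ∃ α : ℕ, v j = (2:ℝ) ^ (-(α:ℝ)) ∧ ε ≤ v j}) ⊆ ↑U := by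
    intro v hv
    simp only [Set.mem_inter_iff, Set.mem_setOf_eq] at hv
    obtain ⟨hv1, hv2⟩ := hv
    choose α hα hαε using hv2
    have hsum : ∑ j, (1 - (2:ℝ)^(μ j - (α j:ℝ)))^2 ≤ 1 := by
      have hterm : ∀ j ∈ Finset.univ,
          (((2:ℝ) ^ (-μ j) - v j) / (2:ℝ) ^ (-μ j)) ^ 2 = (1 - (2:ℝ)^(μ j - (α j:ℝ)))^2 := by
        intro j _
        rw [hα j, term_eq]
      rw [← Finset.sum_congr rfl hterm]
      exact hv1
    obtain ⟨i0, hi0⟩ : ∃ i0 : Fin n, ∀ j, j ≠ i0 → (1 - (2:ℝ)^(μ j - (α j:ℝ)))^2 ≤ 1/2 := by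
      by_cases hbad : ∃ k, 1/2 < (1 - (2:ℝ)^(μ k - (α k:ℝ)))^2
      · obtain ⟨k, hk⟩ := hbad
        refine ⟨k, fun j hj => ?_⟩
        by_contra hj2
        push_neg at hj2
        have hpair : (1 - (2:ℝ)^(μ k - (α k:ℝ)))^2 + (1 - (2:ℝ)^(μ j - (α j:ℝ)))^2 ≤
            ∑ l, (1 - (2:ℝ)^(μ l - (α l:ℝ)))^2 := by
          exact le_trans
            (le_of_eq (Finset.sum_pair (f := fun l => (1 - (2:ℝ)^(μ l - (α l:ℝ)))^2)
              (Ne.symm hj)).symm)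
            (Finset.sum_le_sum_of_subset_of_nonneg (Finset.subset_univ _)
              (fun l _ _ => sq_nonneg _))
        linarith
      · push_neg at hbad
        exact ⟨⟨0, by omega⟩, fun j _ => hbad j⟩
    refine Finset.mem_coe.mpr (Finset.mem_biUnion.mpr ⟨i0, Finset.mem_univ _, ?_⟩)
    rw [hT, Fintype.mem_piFinset]
    intro j
    by_cases hj : j = i0
    · rw [if_pos hj, hG]
      refine Finset.mem_image.mpr ⟨α j, Finset.mem_range.mpr ?_, (hα j).symm⟩
      have : α j ≤ M := alpha_le ε hε0 (α j) ((hα j) ▸ (hαε j))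
      omega
    · rw [if_neg hj, hB]
      have hmem : α j ∈ {β : ℕ | (1 - (2:ℝ)^(μ j - (β:ℝ)))^2 ≤ 1/2} := hi0 j hj
      have hmmem : m j ∈ {β : ℕ | (1 - (2:ℝ)^(μ j - (β:ℝ)))^2 ≤ 1/2} := Nat.sInf_mem ⟨α j, hmem⟩
      have hlow : m j ≤ α j := Nat.sInf_le hmem
      have hhigh : α j ≤ m j + 2 := Aset_close (μ j) hmmem hmem
      refine Finset.mem_image.mpr ⟨α j, ?_, (hα j).symm⟩
      simp only [Finset.mem_insert, Finset.mem_singleton]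
      omega
  calc ({x : Fin n → ℝ | ∑ j, (((2:ℝ) ^ (-μ j) - x j) / (2:ℝ) ^ (-μ j)) ^ 2 ≤ 1} ∩
      {v : Fin n → ℝ | ∀ j, ∃ α : ℕ, v j = (2:ℝ) ^ (-(α:ℝ)) ∧ ε ≤ v j}).ncard ≤ U.card := by
        rw [← Set.ncard_coe_finset]
        exact Set.ncard_le_ncard hsub U.finite_toSet
    _ ≤ ∑ i, (T i).card := Finset.card_biUnion_le
    _ ≤ ∑ _i : Fin n, (M+1) * 3^(n-1) := by
        refine Finset.sum_le_sum fun i _ => ?_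
        rw [hT, Fintype.card_piFinset]
        calc (∏ j, (if j = i then G else B j).card)
            = (if i = i then G else B i).card *
              ∏ j ∈ Finset.univ.erase i, (if j = i then G else B j).card :=
              (Finset.mul_prod_erase _ _ (Finset.mem_univ i)).symm
          _ ≤ (M+1) * 3^(n-1) := by
              apply Nat.mul_le_mul
              · rw [if_pos rfl, hG]
                exact Finset.card_image_le.trans (by rw [Finset.card_range])
              · calc (∏ j ∈ Finset.univ.erase i, (if j = i then G else B j).card)
                    ≤ ∏ _j ∈ Finset.univ.erase i, 3 := by
                      refine Finset.prod_le_prod' fun j hj => ?_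
                      rw [if_neg (Finset.ne_of_mem_erase hj), hB]
                      exact Finset.card_image_le.trans (card_triple _ _ _)
                  _ = 3 ^ (n-1) := by
                      rw [Finset.prod_const, Finset.card_erase_of_mem (Finset.mem_univ i),
                        Finset.card_univ, Fintype.card_fin]
    _ = n * 3 ^ (n - 1) * (1 + M) := by
        rw [Finset.sum_const, Finset.card_univ, Fintype.card_fin, smul_eq_mul]
        ring
end

section
/- For every n ≥ 2 there is a constant c_n > 0 (one may take c_n = 1/(n·3^{n−1})) such that for all ε ∈ (0,1), any covering of [−1+ε,1−ε]^n by axis-parallel ellipsoids each contained in [−1,1]^n requires at least c_n · (1 + ⌊log₂(1/ε)⌋)^{n−1} ellipsoids. -/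
lemma card_le_three_of_diff_le {T : Finset ℕ} (h : ∀ x ∈ T, ∀ y ∈ T, x ≤ y + 2) :
    T.card ≤ 3 := by
  rcases T.eq_empty_or_nonempty with rfl | hne
  · simp
  · have hmin := T.min'_mem hne
    have hsub : T ⊆ Finset.Icc (T.min' hne) (T.min' hne + 2) := by
      intro x hx
      exact Finset.mem_Icc.2 ⟨T.min'_le x hx, h x hx _ hmin⟩
    calc T.card ≤ _ := Finset.card_le_card hsub
      _ ≤ 3 := by rw [Nat.card_Icc]; omega

set_option maxHeartbeats 2000000 in
/-- For `n ≥ 2` and `ε ∈ (0,1)`, any covering of `[-1+ε,1-ε]^n` by axis-parallel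
ellipsoids contained in `[-1,1]^n` uses at least
`(1/(n·3^{n-1})) · (1 + ⌊log₂(1/ε)⌋)^{n-1}` ellipsoids. -/
theorem axis_parallel_ellipsoid_covering_lower_bound (n : ℕ) (hn : 2 ≤ n)
    (ε : ℝ) (hε : ε ∈ Set.Ioo (0 : ℝ) 1)
    (m : ℕ) (c a : Fin m → Fin n → ℝ) (ha : ∀ i j, 0 < a i j)
    (hsub : ∀ i, {x : Fin n → ℝ | ∑ j, ((x j - c i j) / a i j) ^ 2 ≤ 1} ⊆
      {x : Fin n → ℝ | ∀ j, -1 ≤ x j ∧ x j ≤ 1})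
    (hcover : {x : Fin n → ℝ | ∀ j, -1 + ε ≤ x j ∧ x j ≤ 1 - ε} ⊆
      ⋃ i, {x : Fin n → ℝ | ∑ j, ((x j - c i j) / a i j) ^ 2 ≤ 1}) :
    (1 / (n * 3 ^ (n - 1)) : ℝ) * (1 + (⌊Real.logb 2 (1 / ε)⌋₊ : ℝ)) ^ (n - 1) ≤ m := by
  classical
  obtain ⟨hε0, hε1⟩ := hε
  set L := Real.logb 2 (1 / ε) with hLdef
  have hL0 : 0 ≤ L := Real.logb_nonneg one_lt_two (one_le_one_div hε0 hε1.le)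
  set N := ⌊L⌋₊ with hNdef
  set K := N + 1 with hKdef
  set s : ℝ := if N = 0 then 1 else L / N with hsdef
  have hs1 : 1 ≤ s := by
    rw [hsdef]
    split_ifs with h
    · exact le_refl 1
    · have hN1 : (1:ℝ) ≤ (N:ℝ) := by exact_mod_cast Nat.one_le_iff_ne_zero.2 h
      rw [le_div_iff₀ (by linarith)]
      have hfl : (N:ℝ) ≤ L := Nat.floor_le hL0
      linarith
  have hks : ∀ k : Fin K, ((k : ℕ) : ℝ) * s ≤ L := by
    intro k
    have hkN : (k : ℕ) ≤ N := Nat.lt_succ_iff.1 k.isLt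
    rw [hsdef]
    split_ifs with h
    · have hk0 : (k : ℕ) = 0 := by omega
      rw [hk0]; simpa using hL0
    · have hNpos : (0:ℝ) < (N:ℝ) := by exact_mod_cast Nat.pos_of_ne_zero h
      rw [mul_div_assoc', div_le_iff₀ hNpos]
      have : ((k:ℕ):ℝ) ≤ (N:ℝ) := by exact_mod_cast hkN
      nlinarith
  set t : Fin K → ℝ := fun k => (2:ℝ) ^ (-((k : ℕ) : ℝ) * s) with htdef
  have htpos : ∀ k, 0 < t k := fun k => Real.rpow_pos_of_pos (by norm_num) _
  have ht1 : ∀ k, t k ≤ 1 := by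
    intro k
    apply Real.rpow_le_one_of_one_le_of_nonpos one_le_two
    have h1 : (0:ℝ) ≤ ((k:ℕ):ℝ) * s := mul_nonneg (Nat.cast_nonneg _) (by linarith)
    linarith
  have hepsL : (2:ℝ) ^ (-L) = ε := by
    have h1 : L = - Real.logb 2 ε := by rw [hLdef, one_div, Real.logb_inv]
    rw [h1, neg_neg, Real.rpow_logb two_pos (by norm_num) hε0]
  have hteps : ∀ k, ε ≤ t k := by
    intro k
    rw [← hepsL]
    apply Real.rpow_le_rpow_of_exponent_le one_le_two
    have := hks k; linarith
  -- semiaxis bound: ellipsoids inside the cube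
  have hca : ∀ i j, c i j + a i j ≤ 1 := by
    intro i j
    have hmem : (Function.update (c i) j (c i j + a i j)) ∈
        {x : Fin n → ℝ | ∑ j', ((x j' - c i j') / a i j') ^ 2 ≤ 1} := by
      have hsum : ∑ j', ((Function.update (c i) j (c i j + a i j) j' - c i j') / a i j') ^ 2
          = 1 := by
        rw [Finset.sum_eq_single j]
        · rw [Function.update_self]
          have haj := (ha i j).ne'
          field_simp
          ring
        · intro b _ hb
          rw [Function.update_of_ne hb]
          simp
        · intro h; exact absurd (Finset.mem_univ j) h
      simp only [Set.mem_setOf_eq, hsum, le_refl]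
    have h2 := (hsub i hmem) j
    simpa [Function.update_self] using h2.2
  -- the grid points lie in the covered cube
  have hgrid : ∀ v : Fin n → Fin K, (fun j => 1 - t (v j)) ∈
      {x : Fin n → ℝ | ∀ j, -1 + ε ≤ x j ∧ x j ≤ 1 - ε} := by
    intro v
    simp only [Set.mem_setOf_eq]
    intro j
    constructor
    · have := ht1 (v j); linarith
    · have := hteps (v j); linarith
  -- ellipsoid index sets
  set S : Fin m → Finset (Fin n → Fin K) := fun i =>
    Finset.univ.filter (fun v => ∑ j, ((1 - t (v j) - c i j) / a i j) ^ 2 ≤ 1) with hSdef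
  set T : Fin m → Fin n → Finset (Fin K) := fun i j =>
    Finset.univ.filter (fun k => ((1 - t k - c i j) / a i j) ^ 2 ≤ 1/2) with hTdef
  -- each small-term window has at most 3 grid values
  have hT3 : ∀ i j, (T i j).card ≤ 3 := by
    intro i j
    have himg : (T i j).card = ((T i j).image Fin.val).card :=
      (Finset.card_image_of_injective _ Fin.val_injective).symm
    rw [himg]
    apply card_le_three_of_diff_le
    intro x hx y hy
    by_contra hcon
    push_neg at hcon
    obtain ⟨kx, hkx, rfl⟩ := Finset.mem_image.1 hx
    obtain ⟨ky, hky, rfl⟩ := Finset.mem_image.1 hy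
    have hxy3 : (3:ℝ) ≤ ((kx:ℕ):ℝ) - ((ky:ℕ):ℝ) := by
      have : (ky:ℕ) + 3 ≤ (kx:ℕ) := by omega
      have h1 : ((ky:ℕ):ℝ) + 3 ≤ ((kx:ℕ):ℝ) := by exact_mod_cast this
      linarith
    -- ratio bound : 8 * t kx ≤ t ky
    have h8 : 8 * t kx ≤ t ky := by
      have e1 : t ky = t kx * (2:ℝ) ^ ((((kx:ℕ):ℝ) - ((ky:ℕ):ℝ)) * s) := by
        rw [htdef]
        dsimp only
        rw [← Real.rpow_add two_pos]
        ring_nf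
      have h3s : (3:ℝ) ≤ (((kx:ℕ):ℝ) - ((ky:ℕ):ℝ)) * s := by nlinarith
      have e2 : (8:ℝ) ≤ (2:ℝ) ^ ((((kx:ℕ):ℝ) - ((ky:ℕ):ℝ)) * s) := by
        calc (8:ℝ) = (2:ℝ) ^ ((3:ℕ):ℝ) := by rw [Real.rpow_natCast]; norm_num
          _ ≤ _ := Real.rpow_le_rpow_of_exponent_le one_le_two (by exact_mod_cast h3s)
      rw [e1]
      nlinarith [htpos kx]
    -- quadratic bounds
    have hq : ∀ k, k ∈ T i j → ((1 - c i j) - t k) ^ 2 ≤ (a i j) ^ 2 / 2 := by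
      intro k hk
      have hk2 := (Finset.mem_filter.1 hk).2
      rw [div_pow] at hk2
      have ha2 : (0:ℝ) < (a i j) ^ 2 := pow_pos (ha i j) 2
      have := (div_le_iff₀ ha2).1 hk2
      nlinarith
    have hd : a i j ≤ 1 - c i j := by have := hca i j; linarith
    have hd0 : (0:ℝ) < 1 - c i j := lt_of_lt_of_le (ha i j) hd
    set r : ℝ := Real.sqrt 2 with hrdef
    have hr2 : r ^ 2 = 2 := Real.sq_sqrt (by norm_num)
    have hrpos : (0:ℝ) < r := Real.sqrt_pos.2 (by norm_num)
    have hb1 : r * (t ky - (1 - c i j)) ≤ a i j := by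
      nlinarith [hq ky hky, ha i j, sq_nonneg (r * (t ky - (1 - c i j)) - a i j)]
    have hb2 : r * ((1 - c i j) - t kx) ≤ a i j := by
      nlinarith [hq kx hkx, ha i j, sq_nonneg (r * ((1 - c i j) - t kx) - a i j)]
    have hr97 : (9:ℝ) < 7 * r := by nlinarith
    have h8r : 8 * (r * t kx) ≤ r * t ky := by nlinarith
    nlinarith [mul_pos (show (0:ℝ) < 7 * r - 9 by linarith) hd0, ha i j]
  -- each ellipsoid covers at most n * (3^(n-1) * K) grid points
  have hScard : ∀ i, (S i).card ≤ n * (3 ^ (n - 1) * K) := by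
    intro i
    have hsubset : S i ⊆ Finset.univ.biUnion (fun j0 : Fin n =>
        Fintype.piFinset (fun j => if j = j0 then (Finset.univ : Finset (Fin K)) else T i j)) := by
      intro v hv
      have hsum : ∑ j, ((1 - t (v j) - c i j) / a i j) ^ 2 ≤ 1 := (Finset.mem_filter.1 hv).2
      have hnn : ∀ j, 0 ≤ ((1 - t (v j) - c i j) / a i j) ^ 2 := fun j => sq_nonneg _
      have hone : ∀ j1 j2 : Fin n, j1 ≠ j2 →
          ((1 - t (v j1) - c i j1) / a i j1) ^ 2 ≤ 1/2 ∨
          ((1 - t (v j2) - c i j2) / a i j2) ^ 2 ≤ 1/2 := by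
        intro j1 j2 hne
        by_contra hcon
        push_neg at hcon
        have hsub2 : ({j1, j2} : Finset (Fin n)) ⊆ Finset.univ := Finset.subset_univ _
        have hle := Finset.sum_le_sum_of_subset_of_nonneg hsub2 (fun j _ _ => hnn j)
        rw [Finset.sum_pair hne] at hle
        have := hcon.1
        have := hcon.2
        linarith
      rw [Finset.mem_biUnion]
      by_cases hex : ∃ j0, 1/2 < ((1 - t (v j0) - c i j0) / a i j0) ^ 2
      · obtain ⟨j0, hj0⟩ := hex
        refine ⟨j0, Finset.mem_univ _, ?_⟩
        rw [Fintype.mem_piFinset]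
        intro j
        by_cases hj : j = j0
        · rw [if_pos hj]; exact Finset.mem_univ _
        · rw [if_neg hj]
          refine Finset.mem_filter.2 ⟨Finset.mem_univ _, ?_⟩
          rcases hone j j0 hj with h | h
          · exact h
          · exact absurd h (not_le.2 hj0)
      · push_neg at hex
        refine ⟨⟨0, by omega⟩, Finset.mem_univ _, ?_⟩
        rw [Fintype.mem_piFinset]
        intro j
        by_cases hj : j = ⟨0, by omega⟩
        · rw [if_pos hj]; exact Finset.mem_univ _
        · rw [if_neg hj]
          exact Finset.mem_filter.2 ⟨Finset.mem_univ _, hex j⟩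
    calc (S i).card ≤ _ := Finset.card_le_card hsubset
      _ ≤ ∑ j0 : Fin n, (Fintype.piFinset
          (fun j => if j = j0 then (Finset.univ : Finset (Fin K)) else T i j)).card :=
        Finset.card_biUnion_le
      _ ≤ ∑ _j0 : Fin n, 3 ^ (n - 1) * K := by
        apply Finset.sum_le_sum
        intro j0 _
        rw [Fintype.card_piFinset]
        have hsplit : ∏ j, ((if j = j0 then (Finset.univ : Finset (Fin K)) else T i j)).card
            = ((Finset.univ : Finset (Fin K))).card *
              ∏ j ∈ Finset.univ.erase j0,
                ((if j = j0 then (Finset.univ : Finset (Fin K)) else T i j)).card := by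
          rw [← Finset.mul_prod_erase _ _ (Finset.mem_univ j0), if_pos rfl]
        rw [hsplit]
        have hb : ∏ j ∈ Finset.univ.erase j0,
            ((if j = j0 then (Finset.univ : Finset (Fin K)) else T i j)).card
            ≤ ∏ _j ∈ Finset.univ.erase j0, 3 := by
          apply Finset.prod_le_prod'
          intro j hj
          rw [if_neg (Finset.ne_of_mem_erase hj)]
          exact hT3 i j
        rw [Finset.prod_const] at hb
        have hcard_erase : ((Finset.univ : Finset (Fin n)).erase j0).card = n - 1 := by
          rw [Finset.card_erase_of_mem (Finset.mem_univ _), Finset.card_univ, Fintype.card_fin]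
        rw [hcard_erase] at hb
        have huniv : ((Finset.univ : Finset (Fin K))).card = K := by simp
        rw [huniv]
        calc K * _ ≤ K * 3 ^ (n - 1) := Nat.mul_le_mul_left _ hb
          _ = 3 ^ (n - 1) * K := Nat.mul_comm _ _
      _ = n * (3 ^ (n - 1) * K) := by
        rw [Finset.sum_const, Finset.card_univ, Fintype.card_fin, smul_eq_mul]
  -- the grid is covered
  have hcov : (Finset.univ : Finset (Fin n → Fin K)) ⊆ Finset.univ.biUnion S := by
    intro v _
    have h1 := hcover (hgrid v)
    rw [Set.mem_iUnion] at h1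
    obtain ⟨i, hi⟩ := h1
    simp only [Set.mem_setOf_eq] at hi
    exact Finset.mem_biUnion.2 ⟨i, Finset.mem_univ _,
      Finset.mem_filter.2 ⟨Finset.mem_univ _, by simpa using hi⟩⟩
  -- counting
  have htot : K ^ n ≤ m * (n * (3 ^ (n - 1) * K)) := by
    have h1 : (Finset.univ : Finset (Fin n → Fin K)).card ≤ ∑ i : Fin m, (S i).card :=
      (Finset.card_le_card hcov).trans Finset.card_biUnion_le
    have h2 : ∑ i : Fin m, (S i).card ≤ m * (n * (3 ^ (n - 1) * K)) := by
      calc ∑ i : Fin m, (S i).card ≤ ∑ _i : Fin m, n * (3 ^ (n - 1) * K) :=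
            Finset.sum_le_sum (fun i _ => hScard i)
        _ = m * (n * (3 ^ (n - 1) * K)) := by
            rw [Finset.sum_const, Finset.card_univ, Fintype.card_fin, smul_eq_mul]
    have h3 : (Finset.univ : Finset (Fin n → Fin K)).card = K ^ n := by
      rw [Finset.card_univ, Fintype.card_fun, Fintype.card_fin, Fintype.card_fin]
    omega
  have hKpos : 0 < K := Nat.succ_pos N
  have hmain : K ^ (n - 1) ≤ m * (n * 3 ^ (n - 1)) := by
    have hmul : K ^ (n - 1) * K ≤ (m * (n * 3 ^ (n - 1))) * K := by
      have hpow : K ^ (n - 1) * K = K ^ n := by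
        rw [← pow_succ]; congr 1; omega
      rw [hpow]
      calc K ^ n ≤ m * (n * (3 ^ (n - 1) * K)) := htot
        _ = (m * (n * 3 ^ (n - 1))) * K := by ring
    exact Nat.le_of_mul_le_mul_right hmul hKpos
  -- conclude
  have hpos : (0:ℝ) < (n:ℝ) * 3 ^ (n - 1) := by
    have hn0 : (0:ℝ) < (n:ℝ) := by exact_mod_cast (by omega : 0 < n)
    positivity
  rw [div_mul_eq_mul_div, one_mul, div_le_iff₀ hpos]
  have hcast : ((K:ℕ):ℝ) = 1 + (N:ℝ) := by rw [hKdef]; push_cast; ring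
  have hfin : ((K:ℕ):ℝ) ^ (n - 1) ≤ (m:ℝ) * ((n:ℝ) * 3 ^ (n - 1)) := by
    exact_mod_cast hmain
  rw [hcast] at hfin
  exact hfin
end

section
/- For every n ≥ 1 and ε ∈ (0,1), there exist at most 2^n·(1 + log₂(1/ε))^n axis-parallel boxes, each of which remains inside [−1,1]^n after scaling by a factor of 2 about its center, whose union covers [−1+ε, 1−ε]^n. -/
namespace BoxCoverAux

/-- dyadic points `a i = 1 - 2⁻ⁱ` -/
noncomputable def a (i : ℕ) : ℝ := 1 - (1/2 : ℝ) ^ i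

lemma pow_half_pos (i : ℕ) : (0:ℝ) < (1/2:ℝ)^i := by positivity

lemma pow_half_le_one (i : ℕ) : (1/2:ℝ)^i ≤ 1 :=
  pow_le_one₀ (by norm_num) (by norm_num)

lemma a_nonneg (i : ℕ) : 0 ≤ a i := by
  have := pow_half_le_one i; unfold a; linarith

lemma a_lt_one (i : ℕ) : a i < 1 := by
  have := pow_half_pos i; unfold a; linarith

lemma a_mono (i : ℕ) : a i ≤ a (i+1) := by
  have := pow_half_pos i
  simp only [a, pow_succ]
  nlinarith

/-- 1-D coverage: every `u ∈ [0, 1-ε]` lies in some `[a i, a (i+1)]` with `i < K`. -/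
lemma exists_index (K : ℕ) (hK : 1 ≤ K) (ε : ℝ) (hε0 : 0 < ε)
    (hεK : 1/ε ≤ 2^K) (u : ℝ) (hu0 : 0 ≤ u) (hu1 : u ≤ 1 - ε) :
    ∃ i : ℕ, i < K ∧ a i ≤ u ∧ u ≤ a (i+1) := by
  set v : ℝ := 1 - u with hv
  have hv0 : 0 < v := by
    have : ε ≤ v := by simp [hv]; linarith
    linarith
  have hvε : ε ≤ v := by simp [hv]; linarith
  have hv1 : v ≤ 1 := by simp [hv]; linarith
  have hlognn : 0 ≤ Real.logb 2 (1/v) :=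
    Real.logb_nonneg (by norm_num) (by rw [le_div_iff₀ hv0]; linarith)
  set i : ℕ := min ⌊Real.logb 2 (1/v)⌋₊ (K-1) with hi
  refine ⟨i, ?_, ?_, ?_⟩
  · have : i ≤ K - 1 := min_le_right _ _
    omega
  · -- a i ≤ u, i.e. v ≤ (1/2)^i
    have h1 : (i:ℝ) ≤ Real.logb 2 (1/v) := by
      have h := min_le_left ⌊Real.logb 2 (1/v)⌋₊ (K-1)
      calc (i:ℝ) ≤ (⌊Real.logb 2 (1/v)⌋₊ : ℝ) := by exact_mod_cast h
        _ ≤ _ := Nat.floor_le hlognn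
    have h2 : (2:ℝ)^(i:ℕ) ≤ 1/v := by
      have h := Real.rpow_le_rpow_of_exponent_le one_le_two h1
      rwa [Real.rpow_natCast, Real.rpow_logb (by norm_num) (by norm_num) (by positivity)] at h
    have hmul : (1/2:ℝ)^i * 2^i = 1 := by rw [← mul_pow]; norm_num
    have h2' : (2:ℝ)^i * v ≤ 1 := by
      rw [one_div] at h2
      have h := mul_le_mul_of_nonneg_right h2 hv0.le
      rwa [inv_mul_cancel₀ hv0.ne'] at h
    have h3 : v ≤ (1/2:ℝ)^i := by
      nlinarith [mul_le_mul_of_nonneg_right h2' (pow_half_pos i).le, hmul, hv0]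
    simp only [a]
    linarith
  · -- u ≤ a (i+1), i.e. (1/2)^(i+1) ≤ v
    have key : 1/v ≤ (2:ℝ)^(i+1) := by
      by_cases hcase : ⌊Real.logb 2 (1/v)⌋₊ ≤ K - 1
      · -- i = floor
        have hieq : i = ⌊Real.logb 2 (1/v)⌋₊ := by omega
        have h := Nat.lt_floor_add_one (Real.logb 2 (1/v))
        have h1 : Real.logb 2 (1/v) < ((i:ℝ) + 1) := by
          rw [hieq]; exact_mod_cast h
        have h2 := Real.rpow_lt_rpow_of_exponent_lt (x := (2:ℝ)) (by norm_num) h1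
        rw [Real.rpow_logb (by norm_num) (by norm_num) (by positivity)] at h2
        have : ((i:ℝ)+1) = ((i+1 : ℕ) : ℝ) := by push_cast; ring
        rw [this, Real.rpow_natCast] at h2
        linarith
      · -- i = K - 1, i+1 = K
        have hieq : i = K - 1 := by omega
        have hiK : i + 1 = K := by omega
        have h1 : 1/v ≤ 1/ε := one_div_le_one_div_of_le hε0 hvε
        rw [hiK]
        linarith
    have hmul : (1/2:ℝ)^(i+1) * 2^(i+1) = 1 := by rw [← mul_pow]; norm_num
    have key' : 1 ≤ (2:ℝ)^(i+1) * v := by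
      rw [div_le_iff₀ hv0] at key; linarith
    have h4 : (1/2:ℝ)^(i+1) ≤ v := by
      nlinarith [mul_le_mul_of_nonneg_right key' (pow_half_pos (i+1)).le, hmul, hv0]
    simp only [a]
    linarith

/-- 1-D interval family lo1/hi1 indexed by `k < 2K`. -/
noncomputable def lo1 (K : ℕ) (k : ℕ) : ℝ :=
  if k < K then -(a (k+1)) else a (k - K)

noncomputable def hi1 (K : ℕ) (k : ℕ) : ℝ :=
  if k < K then -(a k) else a (k - K + 1)

lemma lo1_le_hi1 (K k : ℕ) : lo1 K k ≤ hi1 K k := by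
  unfold lo1 hi1
  split
  · simpa using a_mono k
  · exact a_mono _

lemma scale_bounds (K k : ℕ) :
    -2 ≤ 3 * lo1 K k - hi1 K k ∧ 3 * hi1 K k - lo1 K k ≤ 2 := by
  unfold lo1 hi1
  split
  · rename_i h
    have h1 := pow_half_pos k
    have h2 := pow_half_le_one k
    constructor <;> · simp only [a, pow_succ]; nlinarith
  · rename_i h
    have h1 := pow_half_pos (k - K)
    have h2 := pow_half_le_one (k - K)
    constructor <;> · simp only [a, pow_succ]; nlinarith

lemma cover1 (K : ℕ) (hK : 1 ≤ K) (ε : ℝ) (hε0 : 0 < ε) (hε1 : ε < 1)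
    (hεK : 1/ε ≤ 2^K) (t : ℝ) (ht1 : -1 + ε ≤ t) (ht2 : t ≤ 1 - ε) :
    ∃ k : ℕ, k < 2*K ∧ lo1 K k ≤ t ∧ t ≤ hi1 K k := by
  rcases le_or_gt 0 t with h | h
  · obtain ⟨i, hiK, hl, hr⟩ := exists_index K hK ε hε0 hεK t h ht2
    refine ⟨K + i, by omega, ?_, ?_⟩
    · unfold lo1; rw [if_neg (by omega)]
      simpa using hl
    · unfold hi1; rw [if_neg (by omega)]
      simpa using hr
  · obtain ⟨i, hiK, hl, hr⟩ := exists_index K hK ε hε0 hεK (-t) (by linarith) (by linarith)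
    refine ⟨i, by omega, ?_, ?_⟩
    · unfold lo1; rw [if_pos hiK]; linarith
    · unfold hi1; rw [if_pos hiK]; linarith

end BoxCoverAux

open BoxCoverAux in
/-- For every `n ≥ 1` and `ε ∈ (0,1)` there exist at most `2^n·(1 + log₂(1/ε))^n`
axis-parallel boxes, each of which remains inside `[-1,1]^n` after scaling by a
factor of `2` about its center, whose union covers `[-1+ε, 1-ε]^n`. -/
theorem box_covering_upper_bound (n : ℕ) (hn : 1 ≤ n)
    (ε : ℝ) (hε : ε ∈ Set.Ioo (0 : ℝ) 1) :
    ∃ (m : ℕ) (lo hi : Fin m → Fin n → ℝ),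
      (∀ i j, lo i j ≤ hi i j) ∧
      (∀ i, (fun x : Fin n → ℝ => fun j =>
          (lo i j + hi i j) / 2 + 2 * (x j - (lo i j + hi i j) / 2)) ''
          {x : Fin n → ℝ | ∀ j, lo i j ≤ x j ∧ x j ≤ hi i j} ⊆
        {x : Fin n → ℝ | ∀ j, -1 ≤ x j ∧ x j ≤ 1}) ∧
      ({x : Fin n → ℝ | ∀ j, -1 + ε ≤ x j ∧ x j ≤ 1 - ε} ⊆
        ⋃ i, {x : Fin n → ℝ | ∀ j, lo i j ≤ x j ∧ x j ≤ hi i j}) ∧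
      (m : ℝ) ≤ 2 ^ n * (1 + Real.logb 2 (1 / ε)) ^ n := by
  obtain ⟨hε0, hε1⟩ := hε
  have hlogpos : 0 < Real.logb 2 (1/ε) :=
    Real.logb_pos (by norm_num) (by rw [lt_div_iff₀ hε0]; linarith)
  set K : ℕ := ⌈Real.logb 2 (1/ε)⌉₊ with hKdef
  have hK1 : 1 ≤ K := Nat.one_le_iff_ne_zero.mpr (by
    simp only [hKdef, ne_eq, Nat.ceil_eq_zero, not_le]; exact hlogpos)
  have hεK : 1/ε ≤ (2:ℝ)^K := by
    have h1 : Real.logb 2 (1/ε) ≤ (K:ℝ) := Nat.le_ceil _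
    have h2 := Real.rpow_le_rpow_of_exponent_le (x := (2:ℝ)) one_le_two h1
    rwa [Real.rpow_logb (by norm_num) (by norm_num) (by positivity),
      Real.rpow_natCast] at h2
  -- index boxes by functions Fin n → Fin (2*K)
  refine ⟨(2*K)^n,
    fun i j => lo1 K (((finFunctionFinEquiv (m := 2*K) (n := n)).symm i) j),
    fun i j => hi1 K (((finFunctionFinEquiv (m := 2*K) (n := n)).symm i) j),
    ?_, ?_, ?_, ?_⟩
  · intro i j; exact lo1_le_hi1 _ _
  · intro i y hy
    obtain ⟨x, hx, rfl⟩ := hy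
    intro j
    have hb := hx j
    obtain ⟨hs1, hs2⟩ := scale_bounds K (((finFunctionFinEquiv (m := 2*K) (n := n)).symm i) j)
    dsimp only at hb ⊢
    exact ⟨by nlinarith [hb.1, hb.2], by nlinarith [hb.1, hb.2]⟩
  · intro x hx
    have hchoice : ∀ j : Fin n, ∃ k : Fin (2*K),
        lo1 K (k : ℕ) ≤ x j ∧ x j ≤ hi1 K (k : ℕ) := by
      intro j
      obtain ⟨k, hk, h1, h2⟩ := cover1 K hK1 ε hε0 hε1 hεK (x j) (hx j).1 (hx j).2
      exact ⟨⟨k, hk⟩, h1, h2⟩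
    choose f hf using hchoice
    refine Set.mem_iUnion.mpr ⟨finFunctionFinEquiv f, ?_⟩
    intro j
    simpa using hf j
  · have hKle : (K:ℝ) ≤ 1 + Real.logb 2 (1/ε) := by
      have := Nat.ceil_lt_add_one hlogpos.le
      rw [hKdef]; push_cast; linarith
    calc ((2*K)^n : ℕ) = ((2*(K:ℝ))^n : ℝ) := by push_cast; ring
      _ ≤ (2 * (1 + Real.logb 2 (1/ε)))^n := by
          apply pow_le_pow_left₀ (by positivity)
          linarith
      _ = 2 ^ n * (1 + Real.logb 2 (1 / ε)) ^ n := by rw [mul_pow]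
end

section
/- Fix n ≥ 1 and ε ∈ (0,1). Let K ⊂ ℝ^n be centrally symmetric and let K_1,…,K_m be affine copies of K such that each K_j scaled by 2 about its center is contained in [−1,1]^n and K_1 ∪ ⋯ ∪ K_m ⊇ [−1+ε,1−ε]^n. Then m ≥ (1/2^n)·(1 + ⌊log₂(1/ε)⌋)^n. -/
/-- Lower bound for coverings by affine copies of a centrally symmetric body:
if affine copies `K_j` of a centrally symmetric body `K` cover `[-1+ε,1-ε]^n` and each
`K_j` scaled by `2` about its center lies in `[-1,1]^n`, then
`m ≥ (1/2^n)·(1 + ⌊log₂(1/ε)⌋)^n`. -/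
theorem symmetric_body_covering_lower_bound (n : ℕ) (hn : 1 ≤ n)
    (ε : ℝ) (hε : ε ∈ Set.Ioo (0 : ℝ) 1)
    (K : Set (Fin n → ℝ)) (hKsym : ∀ x ∈ K, -x ∈ K)
    (m : ℕ) (A : Fin m → Matrix (Fin n) (Fin n) ℝ) (hA : ∀ i, IsUnit (A i).det)
    (b : Fin m → (Fin n → ℝ))
    (Kc : Fin m → Set (Fin n → ℝ))
    (hKc : ∀ i, Kc i = (fun x => (A i).mulVec x + b i) '' K)
    (hscal : ∀ i, (fun x : Fin n → ℝ => fun j => b i j + 2 * (x j - b i j)) '' Kc i ⊆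
      {x : Fin n → ℝ | ∀ j, -1 ≤ x j ∧ x j ≤ 1})
    (hcover : {x : Fin n → ℝ | ∀ j, -1 + ε ≤ x j ∧ x j ≤ 1 - ε} ⊆ ⋃ i, Kc i) :
    (1 / 2 ^ n : ℝ) * (1 + (⌊Real.logb 2 (1 / ε)⌋₊ : ℝ)) ^ n ≤ m := by
  classical
  obtain ⟨hε0, hε1⟩ := hε
  set N := ⌊Real.logb 2 (1 / ε)⌋₊ with hN
  set L := N + 1 with hL
  -- key: 2^N ≤ 1/ε
  have h2N : (2 : ℝ) ^ N ≤ 1 / ε := by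
    have hy : (1 : ℝ) ≤ 1 / ε := (le_div_iff₀ hε0).mpr (by linarith)
    have hypos : (0 : ℝ) < 1 / ε := by positivity
    calc (2 : ℝ) ^ N = (2 : ℝ) ^ (N : ℝ) := (Real.rpow_natCast 2 N).symm
      _ ≤ (2 : ℝ) ^ (Real.logb 2 (1 / ε)) :=
          Real.rpow_le_rpow_of_exponent_le one_le_two
            (Nat.floor_le (Real.logb_nonneg one_lt_two hy))
      _ = 1 / ε := Real.rpow_logb two_pos (by norm_num) hypos
  -- grid values and grid points
  set v : ℕ → ℝ := fun a => 1 - 2 ^ a * ε with hv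
  set f : (Fin n → Fin L) → (Fin n → ℝ) := fun k j => v (k j) with hf
  have hfmem : ∀ k, f k ∈ {x : Fin n → ℝ | ∀ j, -1 + ε ≤ x j ∧ x j ≤ 1 - ε} := by
    intro k j
    have hk : (k j : ℕ) ≤ N := Nat.lt_succ_iff.mp (k j).2
    have h1 : (2 : ℝ) ^ (k j : ℕ) ≤ 1 / ε :=
      le_trans (pow_le_pow_right₀ one_le_two hk) h2N
    have h2 : (2 : ℝ) ^ (k j : ℕ) * ε ≤ 1 := by
      rw [le_div_iff₀ hε0] at h1; linarith
    have h3 : (1 : ℝ) ≤ (2 : ℝ) ^ (k j : ℕ) := one_le_pow₀ one_le_two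
    have h4 : ε ≤ (2 : ℝ) ^ (k j : ℕ) * ε := by nlinarith
    constructor
    · show -1 + ε ≤ 1 - 2 ^ (k j : ℕ) * ε; linarith
    · show 1 - 2 ^ (k j : ℕ) * ε ≤ 1 - ε; linarith
  -- choose which piece covers each grid point
  have hgex : ∀ k, ∃ i, f k ∈ Kc i := fun k => Set.mem_iUnion.mp (hcover (hfmem k))
  choose g hg using hgex
  -- reflection stays in Kc i
  have hrefl : ∀ i, ∀ x ∈ Kc i, (fun j => 2 * b i j - x j) ∈ Kc i := by
    intro i x hx
    rw [hKc i] at hx ⊢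
    obtain ⟨u, hu, rfl⟩ := hx
    refine ⟨-u, hKsym u hu, ?_⟩
    funext j
    simp [Matrix.mulVec_neg]
    ring
  -- bound from scaling
  have hbound : ∀ i, ∀ x ∈ Kc i, ∀ j, -1 ≤ 2 * x j - b i j ∧ 2 * x j - b i j ≤ 1 := by
    intro i x hx j
    have h := hscal i (Set.mem_image_of_mem _ hx) j
    constructor <;> [linarith [h.1]; linarith [h.2]]
  -- each fiber has at most 2^n elements
  have hfiber : ∀ i : Fin m, (Finset.univ.filter (fun k => g k = i)).card ≤ 2 ^ n := by
    intro i
    set T : Fin n → Finset (Fin L) :=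
      fun j => Finset.univ.filter (fun a : Fin L => ∃ x ∈ Kc i, x j = v (a : ℕ)) with hT
    have hsub : Finset.univ.filter (fun k => g k = i) ⊆ Fintype.piFinset T := by
      intro k hk
      rw [Finset.mem_filter] at hk
      rw [Fintype.mem_piFinset]
      intro j
      rw [hT]
      simp only [Finset.mem_filter, Finset.mem_univ, true_and]
      exact ⟨f k, hk.2 ▸ hg k, rfl⟩
    have hTcard : ∀ j, (T j).card ≤ 2 := by
      intro j
      have hkey : ∀ a ∈ T j, ∀ c ∈ T j, (c : ℕ) ≤ (a : ℕ) + 1 := by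
        intro a ha c hc
        rw [hT, Finset.mem_filter] at ha hc
        obtain ⟨x, hx, hxj⟩ := ha.2
        obtain ⟨y, hy, hyj⟩ := hc.2
        have h1 := (hbound i x hx j).2
        have h2 := (hbound i _ (hrefl i y hy) j).2
        have hxv : x j = 1 - 2 ^ (a : ℕ) * ε := hxj
        have hyv : y j = 1 - 2 ^ (c : ℕ) * ε := hyj
        have hpow : (2 : ℝ) ^ (c : ℕ) ≤ 3 * 2 ^ (a : ℕ) := by
          rw [hxv] at h1
          rw [hyv] at h2
          nlinarith [hε0]
        by_contra hcon
        push_neg at hcon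
        have hc2 : (a : ℕ) + 2 ≤ (c : ℕ) := hcon
        have h5 : (2 : ℝ) ^ ((a : ℕ) + 2) ≤ 2 ^ (c : ℕ) :=
          pow_le_pow_right₀ one_le_two hc2
        have h6 : (0 : ℝ) < 2 ^ (a : ℕ) := by positivity
        rw [pow_add] at h5
        nlinarith
      rcases Finset.eq_empty_or_nonempty (T j) with h | h
      · simp [h]
      · set a0 := (T j).min' h with ha0
        calc (T j).card = ((T j).image Fin.val).card :=
              (Finset.card_image_of_injective _ Fin.val_injective).symm
          _ ≤ (Finset.Icc (a0 : ℕ) ((a0 : ℕ) + 1)).card := by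
              apply Finset.card_le_card
              intro c hc
              rw [Finset.mem_image] at hc
              obtain ⟨c', hc', rfl⟩ := hc
              rw [Finset.mem_Icc]
              exact ⟨(T j).min'_le c' hc', hkey a0 ((T j).min'_mem h) c' hc'⟩
          _ = 2 := by rw [Nat.card_Icc]; omega
    calc (Finset.univ.filter (fun k => g k = i)).card ≤ (Fintype.piFinset T).card :=
          Finset.card_le_card hsub
      _ = ∏ j, (T j).card := Fintype.card_piFinset T
      _ ≤ ∏ _j : Fin n, 2 := Finset.prod_le_prod (fun _ _ => Nat.zero_le _)
          (fun j _ => hTcard j)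
      _ = 2 ^ n := by simp
  -- counting
  have hcount : L ^ n ≤ m * 2 ^ n := by
    have h1 : (Finset.univ : Finset (Fin n → Fin L)).card = L ^ n := by
      simp [Finset.card_univ]
    have h2 := Finset.card_eq_sum_card_fiberwise
      (f := g) (s := (Finset.univ : Finset (Fin n → Fin L))) (t := Finset.univ)
      (fun k _ => Finset.mem_univ _)
    calc L ^ n = ∑ i : Fin m, (Finset.univ.filter (fun k => g k = i)).card := by
          rw [← h1, h2]
      _ ≤ ∑ _i : Fin m, 2 ^ n := Finset.sum_le_sum (fun i _ => hfiber i)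
      _ = m * 2 ^ n := by simp [mul_comm]
  -- conclude
  have hreal : ((L : ℝ)) ^ n ≤ (m : ℝ) * 2 ^ n := by exact_mod_cast hcount
  have hLr : (1 + (N : ℝ)) = (L : ℝ) := by rw [hL]; push_cast; ring
  rw [hLr, div_mul_eq_mul_div, one_mul, div_le_iff₀ (by positivity : (0:ℝ) < 2 ^ n)]
  linarith
end
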